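/- Let K be a field of characteristic different from 2 and let t ∈ K with t ≠ 0. In the polynomial ring K[y₀, y₂, x₁, x₂, x₃, a] in six variables, set Q_U := y₂ + y₀y₂x₁² + y₀x₂² + (y₀² + 1 + y₂² − 2(y₀ + y₀y₂ + y₂))·x₃². Then the polynomial a² + Q_U·a − t·x₂²·y₀² is irreducible in K[y₀, y₂, x₁, x₂, x₃, a]. -/

import Mathlib

open Polynomial in
lemma aux5_polyK {K : Type*} [Field K] {t : K} (ht : t ≠ 0) :
    Irreducible (X ^ 2 + C (X ^ 2 : K[X]) * X - C (C t * X ^ 2) : (K[X])[X]) := by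
  have hdeg : (C (X ^ 2 : K[X]) * X - C (C t * X ^ 2) : (K[X])[X]).degree < 2 := by
    refine lt_of_le_of_lt (degree_sub_le _ _) ?_
    simp only [max_lt_iff]
    constructor
    · exact lt_of_le_of_lt (degree_C_mul_X_le _) (by norm_num)
    · exact lt_of_le_of_lt degree_C_le (by norm_num)
  have hmon : (X ^ 2 + C (X ^ 2 : K[X]) * X - C (C t * X ^ 2) : (K[X])[X]).Monic := by
    rw [add_sub_assoc]
    exact monic_X_pow_add hdeg
  have hnd : (X ^ 2 + C (X ^ 2 : K[X]) * X - C (C t * X ^ 2) : (K[X])[X]).natDegree = 2 := by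
    rw [add_sub_assoc]
    refine natDegree_eq_of_degree_eq_some ?_
    rw [degree_add_eq_left_of_degree_lt (by simpa using hdeg), degree_X_pow]
  by_contra hirr
  obtain ⟨c₁, c₂, hmul, hadd⟩ :=
    (hmon.not_irreducible_iff_exists_add_mul_eq_coeff hnd).mp hirr
  rw [show ((X ^ 2 + C (X ^ 2 : K[X]) * X - C (C t * X ^ 2) : (K[X])[X])).coeff 0
      = -(C t * X ^ 2) by
    simp only [coeff_sub, coeff_add, coeff_X_pow, coeff_C_mul, coeff_X_zero, coeff_C]
    norm_num] at hmul
  rw [show ((X ^ 2 + C (X ^ 2 : K[X]) * X - C (C t * X ^ 2) : (K[X])[X])).coeff 1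
      = X ^ 2 by
    simp only [coeff_sub, coeff_add, coeff_X_pow, coeff_C_mul, coeff_X_one, coeff_C]
    norm_num] at hadd
  have key : c₁ * (c₁ - X ^ 2) = C t * X ^ 2 := by linear_combination c₁ * hadd.symm + hmul
  have h0 : c₁.eval 0 = 0 := by
    have h := congrArg (eval 0) key
    simp at h
    exact h
  obtain ⟨s, hs⟩ : (X : K[X]) ∣ c₁ := by
    rw [X_dvd_iff, coeff_zero_eq_eval_zero]; exact h0
  have hcancel : s * (s - X) = C t := by
    have hX2 : ((X : K[X]) ^ 2) ≠ 0 := pow_ne_zero _ X_ne_zero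
    apply mul_left_cancel₀ hX2
    rw [hs] at key
    linear_combination key
  have hu : IsUnit s := isUnit_of_dvd_unit ⟨s - X, hcancel.symm⟩
    (isUnit_C.mpr ht.isUnit)
  obtain ⟨c, hcu, hc⟩ := isUnit_iff.mp hu
  rw [← hc] at hcancel
  have : -c = 0 := by
    have h := congrArg (fun p => coeff p 1) hcancel
    simpa using h
  exact hcu.ne_zero (by simpa using this)

open Polynomial in
lemma aux5_quad {K : Type*} [Field K] {t : K} (ht : t ≠ 0)
    {R : Type*} [CommRing R] [IsDomain R] (φ : R →+* K[X]) (b c : R)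
    (hb : φ b = X ^ 2) (hc : φ c = C t * X ^ 2) :
    Irreducible (X ^ 2 + C b * X - C c : R[X]) := by
  have hdeg : (C b * X - C c : R[X]).degree < 2 := by
    refine lt_of_le_of_lt (degree_sub_le _ _) ?_
    simp only [max_lt_iff]
    exact ⟨lt_of_le_of_lt (degree_C_mul_X_le _) (by norm_num),
      lt_of_le_of_lt degree_C_le (by norm_num)⟩
  have hmon : (X ^ 2 + C b * X - C c : R[X]).Monic := by
    rw [add_sub_assoc]; exact monic_X_pow_add hdeg
  refine hmon.irreducible_of_irreducible_map φ _ ?_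
  have hmap : (X ^ 2 + C b * X - C c : R[X]).map φ
      = X ^ 2 + C (X ^ 2 : K[X]) * X - C (C t * X ^ 2) := by
    simp [Polynomial.map_add, Polynomial.map_sub, Polynomial.map_mul, Polynomial.map_pow,
      map_C, map_X, hb, hc]
  rw [hmap]
  exact aux5_polyK ht


open MvPolynomial

/-- Let `K` be a field of characteristic different from `2` and let `t ∈ K`
with `t ≠ 0`.  In the polynomial ring `K[y₀, y₂, x₁, x₂, x₃, a]` in six variables, set
`Q_U := y₂ + y₀y₂x₁² + y₀x₂² + (y₀² + 1 + y₂² − 2(y₀ + y₀y₂ + y₂))·x₃²`.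
Then the polynomial `a² + Q_U·a − t·x₂²·y₀²` is irreducible in `K[y₀, y₂, x₁, x₂, x₃, a]`.
Here the six variables `y₀, y₂, x₁, x₂, x₃, a` are `X 0, …, X 5`. -/
theorem stmt_5 (K : Type*) [Field K] (hchar : ringChar K ≠ 2) (t : K) (ht : t ≠ 0) :
    let y0 : MvPolynomial (Fin 6) K := X 0
    let y2 : MvPolynomial (Fin 6) K := X 1
    let x1 : MvPolynomial (Fin 6) K := X 2
    let x2 : MvPolynomial (Fin 6) K := X 3
    let x3 : MvPolynomial (Fin 6) K := X 4
    let a : MvPolynomial (Fin 6) K := X 5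
    let QU : MvPolynomial (Fin 6) K :=
      y2 + y0 * y2 * x1 ^ 2 + y0 * x2 ^ 2
        + (y0 ^ 2 + 1 + y2 ^ 2 - 2 * (y0 + y0 * y2 + y2)) * x3 ^ 2
    Irreducible (a ^ 2 + QU * a - C t * x2 ^ 2 * y0 ^ 2) := by
  intro y0 y2 x1 x2 x3 a QU
  set e : MvPolynomial (Fin 6) K ≃ₐ[K] Polynomial (MvPolynomial (Fin 5) K) :=
    (renameEquiv K (Equiv.swap (0 : Fin 6) 5)).trans (MvPolynomial.finSuccEquiv K 5) with he
  have hrw : ∀ i : Fin 6, e (X i) = MvPolynomial.finSuccEquiv K 5 (X (Equiv.swap (0 : Fin 6) 5 i)) := by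
    intro i
    rw [he, AlgEquiv.trans_apply, renameEquiv_apply, rename_X]
  have h0 : e y0 = Polynomial.C (X 4) := by
    rw [hrw, show Equiv.swap (0 : Fin 6) 5 0 = Fin.succ 4 by decide, finSuccEquiv_X_succ]
  have h1 : e y2 = Polynomial.C (X 0) := by
    rw [hrw, show Equiv.swap (0 : Fin 6) 5 1 = Fin.succ 0 by decide, finSuccEquiv_X_succ]
  have h2 : e x1 = Polynomial.C (X 1) := by
    rw [hrw, show Equiv.swap (0 : Fin 6) 5 2 = Fin.succ 1 by decide, finSuccEquiv_X_succ]
  have h3 : e x2 = Polynomial.C (X 2) := by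
    rw [hrw, show Equiv.swap (0 : Fin 6) 5 3 = Fin.succ 2 by decide, finSuccEquiv_X_succ]
  have h4 : e x3 = Polynomial.C (X 3) := by
    rw [hrw, show Equiv.swap (0 : Fin 6) 5 4 = Fin.succ 3 by decide, finSuccEquiv_X_succ]
  have h5 : e a = Polynomial.X := by
    rw [hrw, show Equiv.swap (0 : Fin 6) 5 5 = 0 by decide, finSuccEquiv_X_zero]
  have hct : e (C t) = Polynomial.C (C t) := by
    rw [he, AlgEquiv.trans_apply, renameEquiv_apply, rename_C]
    simp [finSuccEquiv_apply]
  set Q5 : MvPolynomial (Fin 5) K :=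
    X 0 + X 4 * X 0 * X 1 ^ 2 + X 4 * X 2 ^ 2
      + (X 4 ^ 2 + 1 + X 0 ^ 2 - 2 * (X 4 + X 4 * X 0 + X 0)) * X 3 ^ 2 with hQ5
  set c5 : MvPolynomial (Fin 5) K := C t * X 2 ^ 2 * X 4 ^ 2 with hc5
  have hEP : e (a ^ 2 + QU * a - C t * x2 ^ 2 * y0 ^ 2)
      = Polynomial.X ^ 2 + Polynomial.C Q5 * Polynomial.X - Polynomial.C c5 := by
    simp only [QU, map_add, map_sub, map_mul, map_pow, map_ofNat, map_one, h0, h1, h2, h3, h4,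
      h5, hct, hQ5, hc5, Polynomial.C_add, Polynomial.C_mul, Polynomial.C_pow, Polynomial.C_sub,
      Polynomial.C_1]
  set φ : MvPolynomial (Fin 5) K →+* Polynomial K :=
    (eval₂Hom (Polynomial.C : K →+* Polynomial K)
      ![0, 0, Polynomial.X, 0, 1]) with hφ
  have hb : φ Q5 = Polynomial.X ^ 2 := by
    simp [hφ, hQ5]
  have hcc : φ c5 = Polynomial.C t * Polynomial.X ^ 2 := by
    simp [hφ, hc5]
  have hirr : Irreducible (Polynomial.X ^ 2 + Polynomial.C Q5 * Polynomial.X - Polynomial.C c5) :=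
    aux5_quad ht φ Q5 c5 hb hcc
  rw [← hEP] at hirr
  exact (MulEquiv.irreducible_iff (e : MvPolynomial (Fin 6) K ≃* Polynomial (MvPolynomial (Fin 5) K))).mp hirr
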